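/- For any non-parity-preserving pair of occurrences in the Thue–Morse word — i.e., any equation t_n[i..i+ℓ-1] = t_n[j..j+ℓ-1] holding with i ≢ j (mod 2) — the length satisfies ℓ ≤ 3. -/

import Mathlib

/-- `u` occurs in `w` starting at 1-indexed position `i`. -/
def occursAt {α : Type*} (w u : List α) (i : ℕ) : Prop :=
  1 ≤ i ∧ i + u.length ≤ w.length + 1 ∧ (w.drop (i - 1)).take u.length = u

/-- `u` is a right extension in `w`: `u = x ++ [c]`, both `x++[c]` and `x++[c']`
occur in `w` for some `c' ≠ c`. -/
def RightExt {α : Type*} (w u : List α) : Prop :=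
  ∃ (x : List α) (c c' : α), c ≠ c' ∧ u = x ++ [c] ∧
    (x ++ [c]) <:+: w ∧ (x ++ [c']) <:+: w

/-- super-maximal right extension: not a proper suffix of another right extension. -/
def SupMaxExt {α : Type*} (w u : List α) : Prop :=
  RightExt w u ∧ ∀ v, RightExt w v → u <:+ v → u = v

def SRE {α : Type*} (w : List α) : Set (List α) := {u | SupMaxExt w u}

noncomputable def chi {α : Type*} (w : List α) : ℕ := (SRE w).ncard

/-- `w` ends with a character that occurs nowhere else. -/
def UniqueTerm {α : Type*} (w : List α) : Prop :=
  ∃ (v : List α) (d : α), w = v ++ [d] ∧ d ∉ v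

/-- substring equation system -/
structure SES (α : Type*) where
  n : ℕ
  Eqs : Finset (ℕ × ℕ × ℕ)
  Ch : Finset (ℕ × α)

def SES.valid {α : Type*} (E : SES α) : Prop :=
  (∀ e ∈ E.Eqs, 1 ≤ e.1 ∧ 1 ≤ e.2.1 ∧ 1 ≤ e.2.2 ∧
      e.1 + e.2.2 ≤ E.n + 1 ∧ e.2.1 + e.2.2 ≤ E.n + 1) ∧
  (∀ kc ∈ E.Ch, 1 ≤ kc.1 ∧ kc.1 ≤ E.n)

def SES.sat {α : Type*} (E : SES α) (w : List α) : Prop :=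
  w.length = E.n ∧
  (∀ e ∈ E.Eqs, (w.drop (e.1 - 1)).take e.2.2 = (w.drop (e.2.1 - 1)).take e.2.2) ∧
  (∀ kc ∈ E.Ch, w[kc.1 - 1]? = some kc.2)

def SES.represents {α : Type*} (E : SES α) (w : List α) : Prop :=
  E.sat w ∧ ∀ w' : List α, E.sat w' → w' = w

def SES.size {α : Type*} (E : SES α) : ℕ := E.Eqs.card + E.Ch.card

/-- minimum size of a valid SES representing `w` -/
noncomputable def sVal {α : Type*} (w : List α) : ℕ :=
  sInf {k | ∃ E : SES α, E.valid ∧ E.represents w ∧ E.size = k}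

/-- bidirectional macro scheme machinery -/
def phraseLen {α : Type*} : α ⊕ (ℕ × ℕ) → ℕ
  | Sum.inl _ => 1
  | Sum.inr (_, ℓ) => ℓ

def startPos {α : Type*} (ph : List (α ⊕ (ℕ × ℕ))) (t : ℕ) : ℕ :=
  1 + ((ph.take t).map phraseLen).sum

/-- the phrase list `ph` is a (content-correct) macro scheme for `w` -/
def BMSFor {α : Type*} (w : List α) (ph : List (α ⊕ (ℕ × ℕ))) : Prop :=
  (ph.map phraseLen).sum = w.length ∧
  ∀ t (h : t < ph.length),
    match ph.get ⟨t, h⟩ with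
    | Sum.inl c => w[startPos ph t - 1]? = some c
    | Sum.inr (p, ℓ) => 1 ≤ ℓ ∧ 1 ≤ p ∧ p + ℓ ≤ w.length + 1 ∧
        (w.drop (startPos ph t - 1)).take ℓ = (w.drop (p - 1)).take ℓ

/-- the transition function τ (on 0-based offsets) -/
def tauAux {α : Type*} : List (α ⊕ (ℕ × ℕ)) → ℕ → Option ℕ
  | [], _ => none
  | (Sum.inl _) :: rest, i => if i = 0 then none else tauAux rest (i - 1)
  | (Sum.inr (p, ℓ)) :: rest, i => if i < ℓ then some (p + i) else tauAux rest (i - ℓ)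

/-- τ on 1-indexed positions -/
def tauStep {α : Type*} (ph : List (α ⊕ (ℕ × ℕ))) (i : ℕ) : Option ℕ :=
  tauAux ph (i - 1)

/-- validity: every position reaches ⊥ after finitely many steps -/
def BMSValid {α : Type*} (ph : List (α ⊕ (ℕ × ℕ))) (n : ℕ) : Prop :=
  ∀ i, 1 ≤ i → i ≤ n →
    ∃ k, (fun o : Option ℕ => o.bind (tauStep ph))^[k] (some i) = none

noncomputable def bVal {α : Type*} (w : List α) : ℕ :=
  sInf {k | ∃ ph : List (α ⊕ (ℕ × ℕ)),
      BMSFor w ph ∧ BMSValid ph w.length ∧ ph.length = k}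

/-- string attractor -/
def IsAttractor {α : Type*} (w : List α) (Γ : Finset ℕ) : Prop :=
  (∀ p ∈ Γ, 1 ≤ p ∧ p ≤ w.length) ∧
  ∀ u : List α, u ≠ [] → u <:+: w →
    ∃ i, occursAt w u i ∧ ∃ p ∈ Γ, i ≤ p ∧ p ≤ i + u.length - 1

noncomputable def gammaVal {α : Type*} (w : List α) : ℕ :=
  sInf {k | ∃ Γ : Finset ℕ, IsAttractor w Γ ∧ Γ.card = k}

/-- Thue–Morse words over Bool (`false` = a, `true` = b) -/
def tm : ℕ → List Bool
  | 0 => [false]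
  | n + 1 => (tm n).flatMap (fun b => [b, !b])

/-- leftmost occurrence -/
def leftmostOcc {α : Type*} (w v : List α) (i : ℕ) : Prop :=
  occursAt w v i ∧ ∀ i', occursAt w v i' → i ≤ i'

/-- generating pairs of the equivalence `≡_χ` -/
def GenPair {α : Type*} (w : List α) (j j' : ℕ) : Prop :=
  ∃ (y z x : List α) (c c' : α) (i i' : ℕ),
    x ≠ [] ∧
    SupMaxExt w (y ++ x ++ [c]) ∧ SupMaxExt w (z ++ x ++ [c']) ∧
    (y = [] ∨ z = [] ∨ y.getLast? ≠ z.getLast?) ∧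
    leftmostOcc w (y ++ x ++ [c]) i ∧ leftmostOcc w (z ++ x ++ [c']) i' ∧
    ∃ k < x.length, j = i + y.length + k ∧ j' = i' + z.length + k

def chiEquiv {α : Type*} (w : List α) : ℕ → ℕ → Prop := Relation.EqvGen (GenPair w)
/-- The infinite Thue–Morse sequence: parity of the number of `1` bits. -/
def tmSeq (n : ℕ) : Bool := decide (n.bits.count true % 2 = 1)

lemma tmSeq_two_mul (k : ℕ) : tmSeq (2 * k) = tmSeq k := by
  rcases Nat.eq_zero_or_pos k with rfl | hk
  · rfl
  · unfold tmSeq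
    rw [Nat.bit0_bits k (by omega)]
    simp [List.count_cons]

lemma tmSeq_two_mul_add_one (k : ℕ) : tmSeq (2 * k + 1) = !tmSeq k := by
  unfold tmSeq
  rw [Nat.bit1_bits k]
  rcases Nat.mod_two_eq_zero_or_one (k.bits.count true) with hm | hm <;>
    simp [List.count_cons, Nat.add_mod, hm]

lemma tmSeq_no_triple (b : ℕ) (h1 : tmSeq b = tmSeq (b + 1))
    (h2 : tmSeq (b + 1) = tmSeq (b + 2)) : False := by
  rcases Nat.even_or_odd b with ⟨c, hc⟩ | ⟨c, hc⟩
  · subst hc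
    rw [show c + c = 2 * c by ring] at h1
    rw [show 2 * c + 1 = 2 * c + 1 from rfl] at h1
    rw [tmSeq_two_mul, tmSeq_two_mul_add_one] at h1
    cases tmSeq c <;> simp_all
  · subst hc
    rw [show 2 * c + 1 + 1 = 2 * (c + 1) by ring, show 2 * c + 1 + 2 = 2 * (c + 1) + 1 by ring]
      at h2
    rw [tmSeq_two_mul, tmSeq_two_mul_add_one] at h2
    cases tmSeq (c + 1) <;> simp_all

lemma flatMap_len (l : List Bool) : (l.flatMap (fun b => [b, !b])).length = 2 * l.length := by
  induction l with
  | nil => rfl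
  | cons b t ih => simp only [List.flatMap_cons, List.length_append, List.length_cons,
      List.length_nil, ih]; omega

lemma tm_length (n : ℕ) : (tm n).length = 2 ^ n := by
  induction n with
  | zero => rfl
  | succ n ih =>
      show ((tm n).flatMap (fun b => [b, !b])).length = 2 ^ (n + 1)
      rw [flatMap_len, ih, pow_succ, mul_comm]

lemma flatMap_get?_even (l : List Bool) (k : ℕ) :
    (l.flatMap (fun b => [b, !b]))[2 * k]? = l[k]? := by
  induction l generalizing k with
  | nil => simp
  | cons b t ih =>
      cases k with
      | zero => simp
      | succ k =>
          have : 2 * (k + 1) = 2 * k + 1 + 1 := by ring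
          simp only [List.flatMap_cons, this]
          simpa using ih k

lemma flatMap_get?_odd (l : List Bool) (k : ℕ) :
    (l.flatMap (fun b => [b, !b]))[2 * k + 1]? = (l[k]?).map (fun b => !b) := by
  induction l generalizing k with
  | nil => simp
  | cons b t ih =>
      cases k with
      | zero => simp
      | succ k =>
          have : 2 * (k + 1) + 1 = 2 * k + 1 + 1 + 1 := by ring
          simp only [List.flatMap_cons, this]
          simpa using ih k

lemma tm_get? (n k : ℕ) (h : k < 2 ^ n) : (tm n)[k]? = some (tmSeq k) := by
  induction n generalizing k with
  | zero =>
      interval_cases k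
      simp [tm, tmSeq, Nat.zero_bits]
  | succ n ih =>
      rcases Nat.even_or_odd k with ⟨c, hc⟩ | ⟨c, hc⟩
      · have hc' : k = 2 * c := by omega
        subst hc'
        show ((tm n).flatMap (fun b => [b, !b]))[2 * c]? = _
        rw [flatMap_get?_even, tmSeq_two_mul]
        exact ih c (by rw [pow_succ] at h; omega)
      · subst hc
        show ((tm n).flatMap (fun b => [b, !b]))[2 * c + 1]? = _
        rw [flatMap_get?_odd, tmSeq_two_mul_add_one,
          ih c (by rw [pow_succ] at h; omega)]
        rfl

/-- Key step: a length-4 match at an even and an odd (0-based) position forces a cube. -/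
lemma key_parity (a b : ℕ) (H : ∀ k < 4, tmSeq (2 * a + k) = tmSeq (2 * b + 1 + k)) :
    False := by
  have h0 := H 0 (by norm_num)
  have h1 := H 1 (by norm_num)
  have h2 := H 2 (by norm_num)
  have h3 := H 3 (by norm_num)
  rw [show 2 * a + 0 = 2 * a by ring, show 2 * b + 1 + 0 = 2 * b + 1 by ring,
    tmSeq_two_mul, tmSeq_two_mul_add_one] at h0
  rw [show 2 * b + 1 + 1 = 2 * (b + 1) by ring, tmSeq_two_mul_add_one, tmSeq_two_mul] at h1
  rw [show 2 * a + 2 = 2 * (a + 1) by ring, show 2 * b + 1 + 2 = 2 * (b + 1) + 1 by ring,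
    tmSeq_two_mul, tmSeq_two_mul_add_one] at h2
  rw [show 2 * a + 3 = 2 * (a + 1) + 1 by ring, show 2 * b + 1 + 3 = 2 * (b + 2) by ring,
    tmSeq_two_mul_add_one, tmSeq_two_mul] at h3
  apply tmSeq_no_triple b
  · cases hA : tmSeq a <;> cases hB : tmSeq b <;> simp_all
  · cases hA : tmSeq (a + 1) <;> cases hB : tmSeq (b + 1) <;> simp_all

lemma stmt19_aux (n i j ℓ : ℕ) (hi : 1 ≤ i) (hj : 1 ≤ j)
    (hib : i + ℓ ≤ 2 ^ n + 1) (hjb : j + ℓ ≤ 2 ^ n + 1)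
    (heq : ((tm n).drop (i - 1)).take ℓ = ((tm n).drop (j - 1)).take ℓ)
    (hieven : (i - 1) % 2 = 0) (hjodd : (j - 1) % 2 = 1) : ℓ ≤ 3 := by
  by_contra hℓ
  push_neg at hℓ
  obtain ⟨a, ha⟩ : ∃ a, i - 1 = 2 * a := ⟨(i - 1) / 2, by omega⟩
  obtain ⟨b, hb⟩ : ∃ b, j - 1 = 2 * b + 1 := ⟨(j - 1) / 2, by omega⟩
  apply key_parity a b
  intro k hk
  have hgi : (i - 1) + k < 2 ^ n := by omega
  have hgj : (j - 1) + k < 2 ^ n := by omega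
  have := congrArg (fun l : List Bool => l[k]?) heq
  simp only [List.getElem?_take, if_pos (show k < ℓ by omega), List.getElem?_drop] at this
  rw [tm_get? n _ hgi, tm_get? n _ hgj] at this
  rw [← ha, ← hb]
  exact Option.some_injective _ this

theorem stmt19 (n i j ℓ : ℕ) (hi : 1 ≤ i) (hj : 1 ≤ j)
    (hib : i + ℓ ≤ 2 ^ n + 1) (hjb : j + ℓ ≤ 2 ^ n + 1)
    (heq : ((tm n).drop (i - 1)).take ℓ = ((tm n).drop (j - 1)).take ℓ)
    (hpar : i % 2 ≠ j % 2) : ℓ ≤ 3 := by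
  rcases Nat.even_or_odd (i - 1) with ⟨c, hc⟩ | ⟨c, hc⟩
  · exact stmt19_aux n i j ℓ hi hj hib hjb heq (by omega) (by omega)
  · exact stmt19_aux n j i ℓ hj hi hjb hib heq.symm (by omega) (by omega)
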